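/- arXiv:1701.04327 — 4 statements merged into one kernel-verified Lean document; each statement's English description precedes it below -/
import Mathlib

section
/- Let g : {-1,1}^n → {-1,1}, q : {-1,1}^n → ℝ nonnegative with E_z[q(z)] = 1, and let V, W : {-1,1}^n → ℝ^d assign unit vectors to each input. Then E_{x,y}[g(x·y) q(x·y) ⟨V(x), W(y)⟩] ≤ max_{S ⊆ [n]} |(gq)^(S)|, i.e., the quantum (vector-strategy) bias of an XOR game for an XOR function on an XOR input distribution equals the classical bias. -/
open Finset

/-- The map identifying a bit with `±1`: `false ↦ 1`, `true ↦ -1`. -/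
noncomputable def chi (b : Bool) : ℝ := if b then -1 else 1

/-- Fourier coefficient `F^(S) = E_z[F(z) ∏_{i∈S} z_i]`. -/
noncomputable def fCoeff {n : ℕ} (F : (Fin n → Bool) → ℝ) (S : Finset (Fin n)) : ℝ :=
  (1 / 2 ^ n) * ∑ z : Fin n → Bool, F z * ∏ i ∈ S, chi (z i)

/-- `max_{S ⊆ [n]} |F^(S)|`. -/
noncomputable def maxAbsFCoeff {n : ℕ} (F : (Fin n → Bool) → ℝ) : ℝ :=
  Finset.univ.sup' Finset.univ_nonempty (fun S : Finset (Fin n) => |fCoeff F S|)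

/-!  Auxiliary lemmas -/

lemma chi_mul (a b : Bool) : chi a * chi b = chi (xor a b) := by
  cases a <;> cases b <;> simp [chi]

lemma chiS_mul {n : ℕ} (S : Finset (Fin n)) (x y : Fin n → Bool) :
    (∏ i ∈ S, chi (x i)) * ∏ i ∈ S, chi (y i) = ∏ i ∈ S, chi (xor (x i) (y i)) := by
  rw [← Finset.prod_mul_distrib]
  exact Finset.prod_congr rfl fun i _ => chi_mul _ _

lemma sum_chiS {n : ℕ} (z : Fin n → Bool) :
    ∑ S : Finset (Fin n), ∏ i ∈ S, chi (z i)
      = if z = (fun _ => false) then (2:ℝ)^n else 0 := by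
  have h : ∏ i : Fin n, (chi (z i) + 1)
      = ∑ S : Finset (Fin n), ∏ i ∈ S, chi (z i) := by
    rw [Finset.prod_add, ← Finset.powerset_univ]
    exact Finset.sum_congr rfl fun S _ => by simp
  rw [← h]
  by_cases hz : z = fun _ => false
  · rw [if_pos hz]
    simp only [hz, chi]
    norm_num
  · obtain ⟨i, hi⟩ : ∃ i, z i = true := by
      by_contra hc
      push_neg at hc
      exact hz (funext fun i => by simpa using hc i)
    rw [if_neg hz]
    exact Finset.prod_eq_zero (Finset.mem_univ i) (by simp [hi, chi])

lemma xor_eq_false_fun {n : ℕ} (x y : Fin n → Bool) :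
    (fun i => xor (x i) (y i)) = (fun _ => false) ↔ x = y := by
  constructor
  · intro h
    funext i
    have := congrFun h i
    simpa using this
  · intro h; subst h; funext i; simp

lemma fourier_inversion {n : ℕ} (F : (Fin n → Bool) → ℝ) (z : Fin n → Bool) :
    ∑ S : Finset (Fin n), fCoeff F S * ∏ i ∈ S, chi (z i) = F z := by
  calc ∑ S : Finset (Fin n), fCoeff F S * ∏ i ∈ S, chi (z i)
      = ∑ S : Finset (Fin n), (1/2^n) * ∑ w : Fin n → Bool,
          F w * ∏ i ∈ S, chi (xor (w i) (z i)) := by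
        refine Finset.sum_congr rfl fun S _ => ?_
        rw [fCoeff, mul_assoc, Finset.sum_mul]
        congr 1
        exact Finset.sum_congr rfl fun w _ => by rw [mul_assoc, chiS_mul]
    _ = (1/2^n) * ∑ w : Fin n → Bool, F w *
          ∑ S : Finset (Fin n), ∏ i ∈ S, chi (xor (w i) (z i)) := by
        rw [← Finset.mul_sum, Finset.sum_comm]
        congr 1
        exact Finset.sum_congr rfl fun w _ => (Finset.mul_sum _ _ _).symm
    _ = (1/2^n) * ∑ w : Fin n → Bool, (if w = z then F w * 2^n else 0) := by
        congr 1
        refine Finset.sum_congr rfl fun w _ => ?_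
        rw [sum_chiS]
        simp only [xor_eq_false_fun, mul_ite, mul_zero]
    _ = F z := by
        rw [Finset.sum_ite_eq' Finset.univ z (fun w => F w * 2^n)]
        have h2 : (2:ℝ)^n ≠ 0 := by positivity
        simp only [Finset.mem_univ, if_true]
        field_simp

lemma inner_sum_smul {d : ℕ} {ι : Type*} [Fintype ι] (f g : ι → ℝ)
    (V W : ι → EuclideanSpace ℝ (Fin d)) :
    (inner ℝ (∑ x : ι, f x • V x) (∑ y : ι, g y • W y) : ℝ)
      = ∑ x : ι, ∑ y : ι, (f x * g y) * inner ℝ (V x) (W y) := by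
  rw [sum_inner]
  refine Finset.sum_congr rfl fun x _ => ?_
  rw [real_inner_smul_left, inner_sum, Finset.mul_sum]
  refine Finset.sum_congr rfl fun y _ => ?_
  rw [real_inner_smul_right]; ring

lemma key_orth {n : ℕ} (x y : Fin n → Bool) :
    ∑ S : Finset (Fin n), (∏ i ∈ S, chi (x i)) * (∏ i ∈ S, chi (y i))
      = if x = y then (2:ℝ)^n else 0 := by
  calc ∑ S : Finset (Fin n), (∏ i ∈ S, chi (x i)) * (∏ i ∈ S, chi (y i))
      = ∑ S : Finset (Fin n), ∏ i ∈ S, chi (xor (x i) (y i)) :=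
        Finset.sum_congr rfl fun S _ => chiS_mul S x y
    _ = _ := by rw [sum_chiS]; simp only [xor_eq_false_fun]

lemma inner_coeff {n d : ℕ} (V W : (Fin n → Bool) → EuclideanSpace ℝ (Fin d))
    (S : Finset (Fin n)) :
    (inner ℝ (((1:ℝ)/2^n) • ∑ x : Fin n → Bool, (∏ i ∈ S, chi (x i)) • V x)
           (((1:ℝ)/2^n) • ∑ y : Fin n → Bool, (∏ i ∈ S, chi (y i)) • W y) : ℝ)
      = ((1:ℝ)/2^n) * (1/2^n) * ∑ x : Fin n → Bool, ∑ y : Fin n → Bool,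
          ((∏ i ∈ S, chi (x i)) * (∏ i ∈ S, chi (y i))) * inner ℝ (V x) (W y) := by
  rw [real_inner_smul_left, real_inner_smul_right, inner_sum_smul]
  ring

lemma parseval {n d : ℕ} (V : (Fin n → Bool) → EuclideanSpace ℝ (Fin d)) :
    ∑ S : Finset (Fin n),
        (inner ℝ (((1:ℝ)/2^n) • ∑ x : Fin n → Bool, (∏ i ∈ S, chi (x i)) • V x)
               (((1:ℝ)/2^n) • ∑ y : Fin n → Bool, (∏ i ∈ S, chi (y i)) • V y) : ℝ)
      = (1/2^n) * ∑ x : Fin n → Bool, ‖V x‖^2 := by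
  have h2 : (2:ℝ)^n ≠ 0 := by positivity
  calc ∑ S : Finset (Fin n), (inner ℝ (((1:ℝ)/2^n) • ∑ x : Fin n → Bool, (∏ i ∈ S, chi (x i)) • V x)
               (((1:ℝ)/2^n) • ∑ y : Fin n → Bool, (∏ i ∈ S, chi (y i)) • V y) : ℝ)
      = ((1:ℝ)/2^n) * (1/2^n) * ∑ S : Finset (Fin n), ∑ x : Fin n → Bool, ∑ y : Fin n → Bool,
          ((∏ i ∈ S, chi (x i)) * (∏ i ∈ S, chi (y i))) * inner ℝ (V x) (V y) := by
        rw [Finset.mul_sum]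
        exact Finset.sum_congr rfl fun S _ => inner_coeff V V S
    _ = ((1:ℝ)/2^n) * (1/2^n) * ∑ x : Fin n → Bool, ∑ y : Fin n → Bool,
          (∑ S : Finset (Fin n), (∏ i ∈ S, chi (x i)) * (∏ i ∈ S, chi (y i))) * inner ℝ (V x) (V y) := by
        congr 1
        rw [Finset.sum_comm]
        refine Finset.sum_congr rfl fun x _ => ?_
        rw [Finset.sum_comm]
        refine Finset.sum_congr rfl fun y _ => ?_
        rw [← Finset.sum_mul]
    _ = ((1:ℝ)/2^n) * (1/2^n) * ∑ x : Fin n → Bool,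
          (2:ℝ)^n * inner ℝ (V x) (V x) := by
        congr 1
        refine Finset.sum_congr rfl fun x _ => ?_
        calc ∑ y : Fin n → Bool,
              (∑ S : Finset (Fin n), (∏ i ∈ S, chi (x i)) * (∏ i ∈ S, chi (y i))) * inner ℝ (V x) (V y)
            = ∑ y : Fin n → Bool, (if x = y then (2:ℝ)^n * inner ℝ (V x) (V y) else 0) := by
              refine Finset.sum_congr rfl fun y _ => ?_
              rw [key_orth, ite_mul, zero_mul]
          _ = (2:ℝ)^n * inner ℝ (V x) (V x) := by
              rw [Finset.sum_ite_eq Finset.univ x]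
              simp
    _ = (1/2^n) * ∑ x : Fin n → Bool, ‖V x‖^2 := by
        simp only [real_inner_self_eq_norm_sq, ← Finset.mul_sum]
        field_simp

/-- The quantum (unit-vector strategy) bias of an XOR game for an XOR function `g^⊕`
on an XOR input distribution `2^{-2n} q^⊕` is at most the largest absolute Fourier
coefficient of `gq` (which equals the classical bias). -/
theorem quantum_xor_game_bias_le_max_fourier {n d : ℕ} (g q : (Fin n → Bool) → ℝ)
    (hg : ∀ z, g z = 1 ∨ g z = -1)
    (hq : ∀ z, 0 ≤ q z) (hq1 : (1 / 2 ^ n) * ∑ z : Fin n → Bool, q z = 1)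
    (V W : (Fin n → Bool) → EuclideanSpace ℝ (Fin d))
    (hV : ∀ x, ‖V x‖ = 1) (hW : ∀ y, ‖W y‖ = 1) :
    (1 / 2 ^ n) * ((1 / 2 ^ n) *
        ∑ x : Fin n → Bool, ∑ y : Fin n → Bool,
          g (fun i => xor (x i) (y i)) * q (fun i => xor (x i) (y i)) *
            (inner ℝ (V x) (W y) : ℝ))
      ≤ maxAbsFCoeff (fun z => g z * q z) := by
  classical
  set F : (Fin n → Bool) → ℝ := fun z => g z * q z with hF
  set a : Finset (Fin n) → EuclideanSpace ℝ (Fin d) :=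
    fun S => ((1:ℝ)/2^n) • ∑ x : Fin n → Bool, (∏ i ∈ S, chi (x i)) • V x with ha
  set b : Finset (Fin n) → EuclideanSpace ℝ (Fin d) :=
    fun S => ((1:ℝ)/2^n) • ∑ y : Fin n → Bool, (∏ i ∈ S, chi (y i)) • W y with hb
  set M : ℝ := maxAbsFCoeff F with hM
  have hMle : ∀ S, |fCoeff F S| ≤ M := fun S => by
    rw [hM]; unfold maxAbsFCoeff
    exact Finset.le_sup' (fun S => |fCoeff F S|) (Finset.mem_univ S)
  have hM0 : 0 ≤ M := le_trans (abs_nonneg _) (hMle ∅)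
  -- Step 1 : rewrite the bias as a Fourier-side sum
  have step1 : ∑ S : Finset (Fin n), fCoeff F S * (inner ℝ (a S) (b S) : ℝ)
      = (1 / 2 ^ n : ℝ) * ((1 / 2 ^ n) *
        ∑ x : Fin n → Bool, ∑ y : Fin n → Bool,
          g (fun i => xor (x i) (y i)) * q (fun i => xor (x i) (y i)) *
            (inner ℝ (V x) (W y) : ℝ)) := by
    have perxy : ∀ x y : Fin n → Bool,
        ∑ S : Finset (Fin n), (1/2^n : ℝ)*((1/2^n)*
            ((fCoeff F S * ((∏ i ∈ S, chi (x i)) * (∏ i ∈ S, chi (y i)))) *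
              (inner ℝ (V x) (W y) : ℝ)))
          = (1/2^n : ℝ)*((1/2^n)*
              (g (fun i => xor (x i) (y i)) * q (fun i => xor (x i) (y i)) *
                (inner ℝ (V x) (W y) : ℝ))) := by
      intro x y
      rw [← Finset.mul_sum, ← Finset.mul_sum, ← Finset.sum_mul]
      have : ∑ S : Finset (Fin n),
          fCoeff F S * ((∏ i ∈ S, chi (x i)) * (∏ i ∈ S, chi (y i)))
            = F (fun i => xor (x i) (y i)) := by
        rw [← fourier_inversion F (fun i => xor (x i) (y i))]
        exact Finset.sum_congr rfl fun S _ => by rw [chiS_mul]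
      rw [this, hF]
    calc ∑ S : Finset (Fin n), fCoeff F S * (inner ℝ (a S) (b S) : ℝ)
        = ∑ S : Finset (Fin n), ∑ x : Fin n → Bool, ∑ y : Fin n → Bool,
            (1/2^n : ℝ)*((1/2^n)*
              ((fCoeff F S * ((∏ i ∈ S, chi (x i)) * (∏ i ∈ S, chi (y i)))) *
                (inner ℝ (V x) (W y) : ℝ))) := by
          refine Finset.sum_congr rfl fun S _ => ?_
          simp only [ha, hb]
          rw [inner_coeff V W S]
          simp only [Finset.mul_sum]
          refine Finset.sum_congr rfl fun x _ => Finset.sum_congr rfl fun y _ => by ring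
      _ = ∑ x : Fin n → Bool, ∑ y : Fin n → Bool, ∑ S : Finset (Fin n),
            (1/2^n : ℝ)*((1/2^n)*
              ((fCoeff F S * ((∏ i ∈ S, chi (x i)) * (∏ i ∈ S, chi (y i)))) *
                (inner ℝ (V x) (W y) : ℝ))) := by
          rw [Finset.sum_comm]
          exact Finset.sum_congr rfl fun x _ => Finset.sum_comm
      _ = ∑ x : Fin n → Bool, ∑ y : Fin n → Bool,
            (1/2^n : ℝ)*((1/2^n)*
              (g (fun i => xor (x i) (y i)) * q (fun i => xor (x i) (y i)) *
                (inner ℝ (V x) (W y) : ℝ))) :=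
          Finset.sum_congr rfl fun x _ => Finset.sum_congr rfl fun y _ => perxy x y
      _ = (1 / 2 ^ n : ℝ) * ((1 / 2 ^ n) *
          ∑ x : Fin n → Bool, ∑ y : Fin n → Bool,
            g (fun i => xor (x i) (y i)) * q (fun i => xor (x i) (y i)) *
              (inner ℝ (V x) (W y) : ℝ)) := by
          simp only [Finset.mul_sum]
  -- Step 2 : Parseval
  have card1 : ((1:ℝ)/2^n) * ∑ _x : Fin n → Bool, (1:ℝ) = 1 := by
    rw [Finset.sum_const, Finset.card_univ]
    simp [Fintype.card_fun]
  have ha2 : ∑ S : Finset (Fin n), ‖a S‖^2 = 1 := by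
    calc ∑ S : Finset (Fin n), ‖a S‖^2
        = ∑ S : Finset (Fin n), (inner ℝ (a S) (a S) : ℝ) :=
          Finset.sum_congr rfl fun S _ => (real_inner_self_eq_norm_sq _).symm
      _ = (1/2^n) * ∑ x : Fin n → Bool, ‖V x‖^2 := by
          simp only [ha]; exact parseval V
      _ = 1 := by simp only [hV, one_pow]; exact card1
  have hb2 : ∑ S : Finset (Fin n), ‖b S‖^2 = 1 := by
    calc ∑ S : Finset (Fin n), ‖b S‖^2
        = ∑ S : Finset (Fin n), (inner ℝ (b S) (b S) : ℝ) :=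
          Finset.sum_congr rfl fun S _ => (real_inner_self_eq_norm_sq _).symm
      _ = (1/2^n) * ∑ x : Fin n → Bool, ‖W x‖^2 := by
          simp only [hb]; exact parseval W
      _ = 1 := by simp only [hW, one_pow]; exact card1
  -- Step 3 : Cauchy-Schwarz
  have hcs : ∑ S : Finset (Fin n), ‖a S‖ * ‖b S‖ ≤ 1 := by
    have h := Finset.sum_mul_sq_le_sq_mul_sq Finset.univ
      (fun S : Finset (Fin n) => ‖a S‖) (fun S => ‖b S‖)
    rw [ha2, hb2] at h
    have hnn : 0 ≤ ∑ S : Finset (Fin n), ‖a S‖ * ‖b S‖ :=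
      Finset.sum_nonneg fun S _ => mul_nonneg (norm_nonneg _) (norm_nonneg _)
    nlinarith
  rw [← step1]
  calc ∑ S : Finset (Fin n), fCoeff F S * (inner ℝ (a S) (b S) : ℝ)
      ≤ ∑ S : Finset (Fin n), |fCoeff F S * (inner ℝ (a S) (b S) : ℝ)| :=
        Finset.sum_le_sum fun S _ => le_abs_self _
    _ ≤ ∑ S : Finset (Fin n), M * (‖a S‖ * ‖b S‖) := by
        refine Finset.sum_le_sum fun S _ => ?_
        rw [abs_mul]
        exact mul_le_mul (hMle S) (abs_real_inner_le_norm _ _) (abs_nonneg _) hM0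
    _ = M * ∑ S : Finset (Fin n), ‖a S‖ * ‖b S‖ := (Finset.mul_sum _ _ _).symm
    _ ≤ M * 1 := mul_le_mul_of_nonneg_left hcs hM0
    _ = M := mul_one M
end

section
/- For every n and every nonnegative q : {-1,1}^n → ℝ with E_z[q(z)] = 1, one has max_{S ⊆ [n]} |(OR_n · q)^(S)| ≥ 1/3, where OR_n(z) = 1 if z = (1,...,1) and -1 otherwise. -/
open Finset

/-- `OR_n(z) = 1` iff `z = (1,…,1)` (all bits false), and `-1` otherwise. -/
noncomputable def ORn (n : ℕ) : (Fin n → Bool) → ℝ :=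
  fun z => if (∀ i, z i = false) then 1 else -1

lemma sum_prod_chi {n : ℕ} (z : Fin n → Bool) :
    ∑ S : Finset (Fin n), ∏ i ∈ S, chi (z i)
      = if z = (fun _ => false) then (2:ℝ) ^ n else 0 := by
  have h := Finset.prod_add (fun i => chi (z i)) (fun _ => (1:ℝ)) Finset.univ
  simp only [Finset.prod_const_one, mul_one] at h
  rw [← Finset.powerset_univ, ← h]
  by_cases hz : z = (fun _ => false)
  · subst hz
    simp [chi]
    norm_num
  · simp only [hz, if_false]
    have : ∃ i, z i = true := by
      by_contra hc
      push_neg at hc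
      exact hz (funext fun i => by simpa using hc i)
    obtain ⟨i, hi⟩ := this
    apply Finset.prod_eq_zero (Finset.mem_univ i)
    simp [chi, hi]

/-- For every `n` and every density `q ≥ 0` with `E[q] = 1`,
`max_S |(OR_n·q)^(S)| ≥ 1/3`. -/
theorem orn_max_fourier_ge_third (n : ℕ) (q : (Fin n → Bool) → ℝ)
    (hq : ∀ z, 0 ≤ q z) (hq1 : (1 / 2 ^ n) * ∑ z : Fin n → Bool, q z = 1) :
    (1 / 3 : ℝ) ≤ maxAbsFCoeff (fun z => ORn n z * q z) := by
  set z0 : Fin n → Bool := fun _ => false with hz0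
  set F : (Fin n → Bool) → ℝ := fun z => ORn n z * q z with hF
  set t : ℝ := (1 / 2 ^ n) * q z0 with ht
  have hpow : (0:ℝ) < 2 ^ n := by positivity
  set M : ℝ := maxAbsFCoeff F with hM
  -- empty-set coefficient
  have hempty : fCoeff F ∅ = 2 * t - 1 := by
    unfold fCoeff
    simp only [Finset.prod_empty, mul_one]
    have h1 : ∀ z : Fin n → Bool, F z = (if z = z0 then 2 * q z else 0) - q z := by
      intro z
      by_cases h : z = z0
      · subst h; simp [hF, ORn, hz0]; ring
      · have hne : ¬ (∀ i, z i = false) := fun hall => h (funext fun i => hall i)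
        simp [hF, ORn, hne, h]
    rw [Finset.sum_congr rfl (fun z _ => h1 z), Finset.sum_sub_distrib,
      Finset.sum_ite_eq' Finset.univ z0 (fun z => 2 * q z)]
    simp only [Finset.mem_univ, if_true]
    rw [mul_sub]
    rw [hq1, ht]
    ring
  -- sum of all coefficients
  have hsum : ∑ S : Finset (Fin n), fCoeff F S = q z0 := by
    unfold fCoeff
    rw [← Finset.mul_sum, Finset.sum_comm]
    have : ∀ z : Fin n → Bool, ∑ S : Finset (Fin n), F z * ∏ i ∈ S, chi (z i)
        = F z * (if z = z0 then (2:ℝ)^n else 0) := by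
      intro z
      rw [← Finset.mul_sum, sum_prod_chi]
    rw [Finset.sum_congr rfl (fun z _ => this z)]
    simp only [mul_ite, mul_zero]
    rw [Finset.sum_ite_eq' Finset.univ z0 (fun z => F z * 2 ^ n)]
    simp only [Finset.mem_univ, if_true]
    have hFz0 : F z0 = q z0 := by simp [hF, ORn, hz0]
    rw [hFz0]
    field_simp
  -- card of index set
  have hcard : (Finset.univ : Finset (Finset (Fin n))).card = 2 ^ n := by
    simp [Fintype.card_finset]
  have hle : ∀ S : Finset (Fin n), |fCoeff F S| ≤ M :=
    fun S => Finset.le_sup' (fun S => |fCoeff F S|) (Finset.mem_univ S)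
  -- t ≤ M
  have h1 : t ≤ M := by
    have : q z0 ≤ ∑ S : Finset (Fin n), |fCoeff F S| := by
      rw [← hsum]
      exact Finset.sum_le_sum fun S _ => le_abs_self _
    have h2 : ∑ S : Finset (Fin n), |fCoeff F S| ≤ 2 ^ n * M := by
      calc ∑ S : Finset (Fin n), |fCoeff F S| ≤ ∑ _S : Finset (Fin n), M :=
            Finset.sum_le_sum fun S _ => hle S
        _ = 2 ^ n * M := by rw [Finset.sum_const, hcard]; push_cast; ring
      
    have : q z0 ≤ 2 ^ n * M := le_trans this h2
    rw [ht]
    rw [div_mul_eq_mul_div, one_mul, div_le_iff₀ hpow]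
    linarith
  -- 1 - 2t ≤ M
  have h2 : 1 - 2 * t ≤ M := by
    have := hle ∅
    rw [hempty] at this
    have := neg_abs_le (2 * t - 1)
    have h3 := hle ∅
    rw [hempty] at h3
    linarith [neg_abs_le (2 * t - 1), abs_nonneg (2*t-1)]
  linarith
end

section
/- For n ≥ 2, the polynomial equation 4λ^n - (2λ-1)^n - 1 = 0 has a unique root λ* in the interval [1/2, 1], and min over p ∈ [0,1] of max{1 - 2p^n, 2p^n - (2p-1)^n} equals 1 - 2(λ*)^n. -/
lemma key_geom (n : ℕ) (a b : ℝ) (ha : 1/2 ≤ a) (hab : a ≤ b) (hb : b ≤ 1) :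
    (2*b-1)^n - (2*a-1)^n ≤ 2*(b^n - a^n) := by
  have h1 : (0:ℝ) ≤ 2*a-1 := by linarith
  have h2 : 2*a-1 ≤ a := by linarith
  have h3 : 2*b-1 ≤ b := by linarith
  have h0 : (0:ℝ) ≤ 2*b-1 := by linarith
  have ha0 : (0:ℝ) ≤ a := by linarith
  have hsum : ∑ i ∈ Finset.range n, (2*b-1)^i*(2*a-1)^(n-1-i)
      ≤ ∑ i ∈ Finset.range n, b^i*a^(n-1-i) := by
    apply Finset.sum_le_sum
    intro i _
    apply mul_le_mul (pow_le_pow_left₀ h0 h3 i) (pow_le_pow_left₀ h1 h2 _)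
      (pow_nonneg h1 _) (pow_nonneg (by linarith) _)
  calc (2*b-1)^n - (2*a-1)^n
      = (∑ i ∈ Finset.range n, (2*b-1)^i*(2*a-1)^(n-1-i)) * ((2*b-1) - (2*a-1)) :=
        (geom_sum₂_mul _ _ n).symm
    _ = (∑ i ∈ Finset.range n, (2*b-1)^i*(2*a-1)^(n-1-i)) * (2*(b-a)) := by rw [show (2*b-1) - (2*a-1) = 2*(b-a) from by ring]
    _ ≤ (∑ i ∈ Finset.range n, b^i*a^(n-1-i)) * (2*(b-a)) :=
        mul_le_mul_of_nonneg_right hsum (by linarith)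
    _ = 2*((∑ i ∈ Finset.range n, b^i*a^(n-1-i)) * (b-a)) := by ring
    _ = 2*(b^n - a^n) := by rw [geom_sum₂_mul]

/-- For `n ≥ 2`, the equation `4λⁿ - (2λ-1)ⁿ - 1 = 0` has a unique root `λ*` in
`[1/2, 1]`, and `min_{p∈[0,1]} max {1 - 2pⁿ, 2pⁿ - (2p-1)ⁿ} = 1 - 2(λ*)ⁿ`. -/
theorem unique_root_and_min (n : ℕ) (hn : 2 ≤ n) :
    ∃ l : ℝ, l ∈ Set.Icc (1/2 : ℝ) 1 ∧ 4 * l ^ n - (2 * l - 1) ^ n - 1 = 0 ∧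
      (∀ l' ∈ Set.Icc (1/2 : ℝ) 1, 4 * l' ^ n - (2 * l' - 1) ^ n - 1 = 0 → l' = l) ∧
      IsLeast
        ((fun p : ℝ => max (1 - 2 * p ^ n) (2 * p ^ n - (2 * p - 1) ^ n)) ''
          Set.Icc (0:ℝ) 1)
        (1 - 2 * l ^ n) := by
  have hn0 : n ≠ 0 := by omega
  set f : ℝ → ℝ := fun x => 4 * x ^ n - (2 * x - 1) ^ n - 1 with hf
  -- strict monotonicity of f on [1/2,1]
  have hmono : StrictMonoOn f (Set.Icc (1/2 : ℝ) 1) := by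
    intro a ha b hb hab
    simp only [hf]
    have hkey := key_geom n a b ha.1 hab.le hb.2
    have hpow : a ^ n < b ^ n := pow_lt_pow_left₀ hab (by linarith [ha.1]) hn0
    simp only [Set.mem_Icc] at *
    linarith
  have hcont : ContinuousOn f (Set.Icc (1/2 : ℝ) 1) := by fun_prop
  have hhalf : f (1/2) ≤ 0 := by
    have : ((1:ℝ)/2) ^ n ≤ (1/2 : ℝ) ^ 2 :=
      pow_le_pow_of_le_one (by norm_num) (by norm_num) hn
    simp only [hf]
    have : (2 * (1/2 : ℝ) - 1) ^ n = 0 := by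
      rw [show (2 * (1/2 : ℝ) - 1) = 0 by norm_num, zero_pow hn0]
    nlinarith [pow_le_pow_of_le_one (by norm_num : (0:ℝ) ≤ 1/2) (by norm_num) hn]
  have hone : (0:ℝ) ≤ f 1 := by simp [hf]; norm_num
  obtain ⟨l, hlmem, hlroot⟩ :=
    intermediate_value_Icc (by norm_num : (1/2:ℝ) ≤ 1) hcont ⟨hhalf, hone⟩
  have hlroot' : 4 * l ^ n - (2 * l - 1) ^ n - 1 = 0 := hlroot
  refine ⟨l, hlmem, hlroot', ?_, ?_⟩
  · intro l' hl' hroot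
    exact hmono.injOn hl' hlmem (by show f l' = f l; simp only [hf]; linarith)
  · have heq : 2 * l ^ n - (2 * l - 1) ^ n = 1 - 2 * l ^ n := by
      have := hlroot; simp only [hf] at this; linarith
    constructor
    · refine ⟨l, ⟨by linarith [hlmem.1], hlmem.2⟩, ?_⟩
      simp [heq]
    · rintro y ⟨p, hp, rfl⟩
      rcases le_total p l with h | h
      · have : p ^ n ≤ l ^ n := pow_le_pow_left₀ hp.1 h n
        exact le_trans (by linarith) (le_max_left _ _)
      · have hkey := key_geom n l p hlmem.1 h hp.2
        refine le_trans ?_ (le_max_right _ _)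
        simp only [hf] at hlroot
        linarith
end

section
/- Let g : {-1,1}^n → {-1,1} and let G : {-1,1}^n → [-1,1] satisfy G(x) = sign(ĝ(S_x)) whenever ĝ(S_x) ≠ 0 (i.e., G ∈ g*). Then Σ_{S⊆[n]} |Ĝ(S)| ≥ Σ_{S⊆[n]} |ĝ(S)|, i.e., ‖Ĝ‖₁ ≥ ‖ĝ‖₁. -/
open Finset

/-- Fourier ℓ₁ norm `‖F^‖₁ = ∑_S |F^(S)|`. -/
noncomputable def fourierL1 {n : ℕ} (F : (Fin n → Bool) → ℝ) : ℝ :=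
  ∑ S : Finset (Fin n), |fCoeff F S|

/-- `S_x = {i : x_i = -1}`. -/
def Sx {n : ℕ} (x : Fin n → Bool) : Finset (Fin n) :=
  Finset.univ.filter (fun i => x i = true)

/-- `x ↦ S_x` is an equivalence between points and subsets. -/
def eSx (n : ℕ) : (Fin n → Bool) ≃ Finset (Fin n) where
  toFun := Sx
  invFun S := fun i => decide (i ∈ S)
  left_inv x := by funext i; simp [Sx]
  right_inv S := by ext i; simp [Sx]

lemma prod_chi_symm {n : ℕ} (x z : Fin n → Bool) :
    ∏ i ∈ Sx x, chi (z i) = ∏ i ∈ Sx z, chi (x i) := by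
  have h : ∀ a b : Fin n → Bool,
      ∏ i ∈ Sx a, chi (b i) = ∏ i : Fin n, chi (a i && b i) := by
    intro a b
    rw [Sx, Finset.prod_filter]
    apply Finset.prod_congr rfl
    intro i _
    cases a i <;> simp [chi]
  rw [h, h]
  apply Finset.prod_congr rfl
  intro i _
  rw [Bool.and_comm]

/-- If `g : {-1,1}ⁿ → {-1,1}` and `G ∈ g*` (i.e. `G` maps into `[-1,1]` and
`G(x) = sign(g^(S_x))` whenever `g^(S_x) ≠ 0`), then `‖G^‖₁ ≥ ‖g^‖₁`. -/
theorem star_l1_ge {n : ℕ} (g G : (Fin n → Bool) → ℝ)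
    (hg : ∀ z, g z = 1 ∨ g z = -1)
    (hG1 : ∀ x, G x ∈ Set.Icc (-1:ℝ) 1)
    (hGs : ∀ x, fCoeff g (Sx x) ≠ 0 → G x = Real.sign (fCoeff g (Sx x))) :
    fourierL1 g ≤ fourierL1 G := by
  -- key identity: ∑_x ĝ(S_x) G x = ∑_z g z * Ĝ(S_z)
  have key : ∑ x : Fin n → Bool, fCoeff g (Sx x) * G x
      = ∑ z : Fin n → Bool, g z * fCoeff G (Sx z) := by
    simp only [fCoeff, Finset.mul_sum, Finset.sum_mul]
    rw [Finset.sum_comm]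
    apply Finset.sum_congr rfl
    intro z _
    apply Finset.sum_congr rfl
    intro x _
    rw [prod_chi_symm x z]
    ring
  -- step 1: LHS equals ∑_x |ĝ(S_x)|
  have step1 : ∑ x : Fin n → Bool, fCoeff g (Sx x) * G x
      = ∑ x : Fin n → Bool, |fCoeff g (Sx x)| := by
    apply Finset.sum_congr rfl
    intro x _
    by_cases h : fCoeff g (Sx x) = 0
    · simp [h]
    · rw [hGs x h]
      rcases lt_trichotomy (fCoeff g (Sx x)) 0 with hlt | heq | hgt
      · rw [Real.sign_of_neg hlt, abs_of_neg hlt]; ring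
      · exact absurd heq h
      · rw [Real.sign_of_pos hgt, abs_of_pos hgt]; ring
  have el : fourierL1 g = ∑ x : Fin n → Bool, |fCoeff g (Sx x)| := by
    rw [fourierL1]
    exact (Fintype.sum_equiv (eSx n) _ _ (fun x => rfl)).symm
  have er : fourierL1 G = ∑ z : Fin n → Bool, |fCoeff G (Sx z)| := by
    rw [fourierL1]
    exact (Fintype.sum_equiv (eSx n) _ _ (fun x => rfl)).symm
  rw [el, er, ← step1, key]
  apply Finset.sum_le_sum
  intro z _
  rcases hg z with h | h <;> rw [h]
  · rw [one_mul]; exact le_abs_self _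
  · rw [neg_one_mul]; exact neg_le_abs _
end
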